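/- arXiv:1503.06691 — 3 statements merged into one kernel-verified Lean document; each statement's English description precedes it below -/
import Mathlib

section
/- Let T₁ and T₂ be power bounded operators on complex Hilbert spaces H₁ and H₂, and let (X₁, U₁) and (X₂, U₂) be unitary asymptotes of T₁ and T₂, with U₁, U₂ acting on K₁, K₂ respectively. Then the pair (X₁ ⊕ X₂, U₁ ⊕ U₂), where X₁ ⊕ X₂ : H₁ ⊕ H₂ → K₁ ⊕ K₂ and U₁ ⊕ U₂ act on the Hilbert space orthogonal direct sums, is a unitary asymptote of the orthogonal sum T₁ ⊕ T₂ on H₁ ⊕ H₂. -/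
open Filter Topology

noncomputable section

variable {H : Type u} [NormedAddCommGroup H] [InnerProductSpace ℂ H]

/-- `(X, U)` is a unitary intertwining pair for `T`: `U` is unitary and `X T = U X`. -/
def IsUnitaryPair {K : Type v} [NormedAddCommGroup K] [InnerProductSpace ℂ K] [CompleteSpace K]
    (T : H →L[ℂ] H) (X : H →L[ℂ] K) (U : K →L[ℂ] K) : Prop :=
  U ∈ unitary (K →L[ℂ] K) ∧ X ∘L T = U ∘L X

/-- The pair `(X, U)` is minimal: the smallest closed subspace of `K` containing
`U^{-n}(X(H))` for every `n ≥ 1` is all of `K`. -/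
def IsMinimalPair {K : Type v} [NormedAddCommGroup K] [InnerProductSpace ℂ K] [CompleteSpace K]
    (X : H →L[ℂ] K) (U : K →L[ℂ] K) : Prop :=
  (Submodule.span ℂ {k : K | ∃ (n : ℕ) (h : H),
      k = ((star U) ^ (n + 1)) (X h)}).topologicalClosure = ⊤

/-- `(X, U)` is a unitary asymptote of `T`: it is a unitary intertwining pair and for
every unitary intertwining pair `(X', U')` of `T` there is a unique `Z` with
`Z U = U' Z` and `X' = Z X`. -/
def IsUnitaryAsymptote {K : Type v} [NormedAddCommGroup K] [InnerProductSpace ℂ K]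
    [CompleteSpace K] (T : H →L[ℂ] H) (X : H →L[ℂ] K) (U : K →L[ℂ] K) : Prop :=
  IsUnitaryPair T X U ∧
  ∀ (K' : Type v) [NormedAddCommGroup K'] [InnerProductSpace ℂ K'] [CompleteSpace K']
    (X' : H →L[ℂ] K') (U' : K' →L[ℂ] K'), IsUnitaryPair T X' U' →
      ∃! Z : K →L[ℂ] K', Z ∘L U = U' ∘L Z ∧ X' = Z ∘L X

/-- `T` is power bounded. -/
def PowerBounded (T : H →L[ℂ] H) : Prop :=
  ∃ M : ℝ, ∀ n : ℕ, ‖T ^ n‖ ≤ M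

/-- The orthogonal direct sum `A ⊕ B` of two operators, acting on the Hilbert-space
(ℓ²-) direct sum of the underlying spaces. -/
def directSum {E : Type*} [NormedAddCommGroup E] [InnerProductSpace ℂ E]
    {E' : Type*} [NormedAddCommGroup E'] [InnerProductSpace ℂ E']
    {F : Type*} [NormedAddCommGroup F] [InnerProductSpace ℂ F]
    {F' : Type*} [NormedAddCommGroup F'] [InnerProductSpace ℂ F']
    (A : E →L[ℂ] F) (B : E' →L[ℂ] F') :
    WithLp 2 (E × E') →L[ℂ] WithLp 2 (F × F') :=
  (WithLp.prodContinuousLinearEquiv 2 ℂ F F').symm.toContinuousLinearMap ∘L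
    (A.prodMap B) ∘L (WithLp.prodContinuousLinearEquiv 2 ℂ E E').toContinuousLinearMap

section Aux

variable {E : Type*} [NormedAddCommGroup E] [InnerProductSpace ℂ E]
    {E' : Type*} [NormedAddCommGroup E'] [InnerProductSpace ℂ E']
    {F : Type*} [NormedAddCommGroup F] [InnerProductSpace ℂ F]
    {F' : Type*} [NormedAddCommGroup F'] [InnerProductSpace ℂ F']
    {G : Type*} [NormedAddCommGroup G] [InnerProductSpace ℂ G]
    {G' : Type*} [NormedAddCommGroup G'] [InnerProductSpace ℂ G']

lemma ds_fst (A : E →L[ℂ] F) (B : E' →L[ℂ] F') (x : WithLp 2 (E × E')) :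
    (directSum A B x).fst = A x.fst := rfl

lemma ds_snd (A : E →L[ℂ] F) (B : E' →L[ℂ] F') (x : WithLp 2 (E × E')) :
    (directSum A B x).snd = B x.snd := rfl

lemma ds_comp (A : F →L[ℂ] G) (B : F' →L[ℂ] G') (C : E →L[ℂ] F) (D : E' →L[ℂ] F') :
    directSum A B ∘L directSum C D = directSum (A ∘L C) (B ∘L D) := rfl

/-- The first inclusion `E → E ⊕₂ E'`. -/
def inl2 (E : Type*) [NormedAddCommGroup E] [InnerProductSpace ℂ E]
    (E' : Type*) [NormedAddCommGroup E'] [InnerProductSpace ℂ E'] :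
    E →L[ℂ] WithLp 2 (E × E') :=
  (WithLp.prodContinuousLinearEquiv 2 ℂ E E').symm.toContinuousLinearMap ∘L
    ContinuousLinearMap.inl ℂ E E'

/-- The second inclusion `E' → E ⊕₂ E'`. -/
def inr2 (E : Type*) [NormedAddCommGroup E] [InnerProductSpace ℂ E]
    (E' : Type*) [NormedAddCommGroup E'] [InnerProductSpace ℂ E'] :
    E' →L[ℂ] WithLp 2 (E × E') :=
  (WithLp.prodContinuousLinearEquiv 2 ℂ E E').symm.toContinuousLinearMap ∘L
    ContinuousLinearMap.inr ℂ E E'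

lemma inl2_fst (x : E) : (inl2 E E' x).fst = x := rfl
lemma inl2_snd (x : E) : (inl2 E E' x).snd = 0 := rfl
lemma inr2_fst (x : E') : (inr2 E E' x).fst = 0 := rfl
lemma inr2_snd (x : E') : (inr2 E E' x).snd = x := rfl

lemma wlp_decomp (x : WithLp 2 (E × E')) : inl2 E E' x.fst + inr2 E E' x.snd = x := by
  refine WithLp.ofLp_injective 2 ?_; apply Prod.ext <;> simp [inl2_fst, inl2_snd, inr2_fst, inr2_snd]

lemma ds_comp_inl (A : E →L[ℂ] F) (B : E' →L[ℂ] F') :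
    directSum A B ∘L inl2 E E' = inl2 F F' ∘L A := by
  ext x
  refine WithLp.ofLp_injective 2 ?_; apply Prod.ext
  · rfl
  · show B 0 = 0
    simp

lemma ds_comp_inr (A : E →L[ℂ] F) (B : E' →L[ℂ] F') :
    directSum A B ∘L inr2 E E' = inr2 F F' ∘L B := by
  ext x
  refine WithLp.ofLp_injective 2 ?_; apply Prod.ext
  · show A 0 = 0
    simp
  · rfl

lemma ds_adjoint [CompleteSpace E] [CompleteSpace E'] [CompleteSpace F] [CompleteSpace F']
    (A : E →L[ℂ] F) (B : E' →L[ℂ] F') :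
    ContinuousLinearMap.adjoint (directSum A B)
      = directSum (ContinuousLinearMap.adjoint A) (ContinuousLinearMap.adjoint B) := by
  symm
  rw [ContinuousLinearMap.eq_adjoint_iff]
  intro x y
  simp [WithLp.prod_inner_apply, ds_fst, ds_snd, ContinuousLinearMap.adjoint_inner_left]

lemma ds_unitary [CompleteSpace E] [CompleteSpace E']
    {U : E →L[ℂ] E} {V : E' →L[ℂ] E'}
    (hU : U ∈ unitary (E →L[ℂ] E)) (hV : V ∈ unitary (E' →L[ℂ] E')) :
    directSum U V ∈ unitary (WithLp 2 (E × E') →L[ℂ] WithLp 2 (E × E')) := by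
  rw [Unitary.mem_iff] at hU hV ⊢
  have hstar : star (directSum U V) = directSum (star U) (star V) := by
    rw [ContinuousLinearMap.star_eq_adjoint, ContinuousLinearMap.star_eq_adjoint,
      ContinuousLinearMap.star_eq_adjoint, ds_adjoint]
  constructor
  · rw [hstar, ContinuousLinearMap.mul_def, ds_comp, ← ContinuousLinearMap.mul_def,
      ← ContinuousLinearMap.mul_def, hU.1, hV.1]
    rfl
  · rw [hstar, ContinuousLinearMap.mul_def, ds_comp, ← ContinuousLinearMap.mul_def,
      ← ContinuousLinearMap.mul_def, hU.2, hV.2]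
    rfl

end Aux

/-- If `(X₁, U₁)` and `(X₂, U₂)` are unitary asymptotes of the power bounded operators
`T₁` and `T₂`, then `(X₁ ⊕ X₂, U₁ ⊕ U₂)` is a unitary asymptote of `T₁ ⊕ T₂`. -/
theorem stmt_6 {H₁ H₂ : Type u} {K₁ K₂ : Type v}
    [NormedAddCommGroup H₁] [InnerProductSpace ℂ H₁]
    [NormedAddCommGroup H₂] [InnerProductSpace ℂ H₂]
    [NormedAddCommGroup K₁] [InnerProductSpace ℂ K₁] [CompleteSpace K₁]
    [NormedAddCommGroup K₂] [InnerProductSpace ℂ K₂] [CompleteSpace K₂]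
    (T₁ : H₁ →L[ℂ] H₁) (T₂ : H₂ →L[ℂ] H₂)
    (hT₁ : PowerBounded T₁) (hT₂ : PowerBounded T₂)
    (X₁ : H₁ →L[ℂ] K₁) (U₁ : K₁ →L[ℂ] K₁)
    (X₂ : H₂ →L[ℂ] K₂) (U₂ : K₂ →L[ℂ] K₂)
    (h₁ : IsUnitaryAsymptote T₁ X₁ U₁) (h₂ : IsUnitaryAsymptote T₂ X₂ U₂) :
    IsUnitaryAsymptote (directSum T₁ T₂) (directSum X₁ X₂) (directSum U₁ U₂) := by
  obtain ⟨⟨hU₁, hX₁⟩, huniv₁⟩ := h₁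
  obtain ⟨⟨hU₂, hX₂⟩, huniv₂⟩ := h₂
  constructor
  · exact ⟨ds_unitary hU₁ hU₂, by rw [ds_comp, ds_comp, hX₁, hX₂]⟩
  · intro K' _ _ _ X' U' hP
    -- the restricted pairs
    have hP1 : IsUnitaryPair T₁ (X' ∘L inl2 H₁ H₂) U' := by
      refine ⟨hP.1, ?_⟩
      rw [ContinuousLinearMap.comp_assoc, ← ds_comp_inl T₁ T₂,
        ← ContinuousLinearMap.comp_assoc, hP.2, ContinuousLinearMap.comp_assoc]
    have hP2 : IsUnitaryPair T₂ (X' ∘L inr2 H₁ H₂) U' := by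
      refine ⟨hP.1, ?_⟩
      rw [ContinuousLinearMap.comp_assoc, ← ds_comp_inr T₁ T₂,
        ← ContinuousLinearMap.comp_assoc, hP.2, ContinuousLinearMap.comp_assoc]
    obtain ⟨Z₁, ⟨hZ₁U, hZ₁X⟩, uZ₁⟩ := huniv₁ K' (X' ∘L inl2 H₁ H₂) U' hP1
    obtain ⟨Z₂, ⟨hZ₂U, hZ₂X⟩, uZ₂⟩ := huniv₂ K' (X' ∘L inr2 H₁ H₂) U' hP2
    refine ⟨Z₁ ∘L (ContinuousLinearMap.fst ℂ K₁ K₂ ∘L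
        (WithLp.prodContinuousLinearEquiv 2 ℂ K₁ K₂).toContinuousLinearMap) +
      Z₂ ∘L (ContinuousLinearMap.snd ℂ K₁ K₂ ∘L
        (WithLp.prodContinuousLinearEquiv 2 ℂ K₁ K₂).toContinuousLinearMap), ⟨?_, ?_⟩, ?_⟩
    · ext k
      show Z₁ (U₁ k.fst) + Z₂ (U₂ k.snd) = U' (Z₁ k.fst + Z₂ k.snd)
      have e1 := ContinuousLinearMap.ext_iff.mp hZ₁U k.fst
      have e2 := ContinuousLinearMap.ext_iff.mp hZ₂U k.snd
      simp only [ContinuousLinearMap.comp_apply] at e1 e2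
      rw [e1, e2, map_add]
    · ext h
      show X' h = Z₁ (X₁ h.fst) + Z₂ (X₂ h.snd)
      have e1 := ContinuousLinearMap.ext_iff.mp hZ₁X h.fst
      have e2 := ContinuousLinearMap.ext_iff.mp hZ₂X h.snd
      simp only [ContinuousLinearMap.comp_apply] at e1 e2
      rw [← e1, ← e2, ← map_add, wlp_decomp]
    · rintro W ⟨hWU, hWX⟩
      have w1 : W ∘L inl2 K₁ K₂ = Z₁ := by
        refine uZ₁ _ ⟨?_, ?_⟩
        · rw [ContinuousLinearMap.comp_assoc, ← ds_comp_inl U₁ U₂,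
            ← ContinuousLinearMap.comp_assoc, hWU, ContinuousLinearMap.comp_assoc]
        · rw [hWX, ContinuousLinearMap.comp_assoc, ds_comp_inl,
            ← ContinuousLinearMap.comp_assoc]
      have w2 : W ∘L inr2 K₁ K₂ = Z₂ := by
        refine uZ₂ _ ⟨?_, ?_⟩
        · rw [ContinuousLinearMap.comp_assoc, ← ds_comp_inr U₁ U₂,
            ← ContinuousLinearMap.comp_assoc, hWU, ContinuousLinearMap.comp_assoc]
        · rw [hWX, ContinuousLinearMap.comp_assoc, ds_comp_inr,
            ← ContinuousLinearMap.comp_assoc]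
      ext k
      show W k = Z₁ k.fst + Z₂ k.snd
      have e1 := ContinuousLinearMap.ext_iff.mp w1 k.fst
      have e2 := ContinuousLinearMap.ext_iff.mp w2 k.snd
      simp only [ContinuousLinearMap.comp_apply] at e1 e2
      rw [← e1, ← e2, ← map_add, wlp_decomp]

end
end

section
/- Let T be a power bounded operator on a complex Hilbert space H with unitary asymptote (X, U), U acting on K, and let M be a closed subspace of H invariant for T (T M ⊆ M). Let M̃ be the smallest closed subspace of K containing U^{-n}(X(M)) for every integer n ≥ 1. Then M̃ is a reducing subspace for U, X maps M into M̃, and the pair (X|_M, U|_{M̃}), consisting of the restriction X|_M : M → M̃ and the unitary restriction U|_{M̃}, is a unitary asymptote of the restriction T|_M. -/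
open Filter Topology

noncomputable section

variable {H : Type u} [NormedAddCommGroup H] [InnerProductSpace ℂ H]

instance {K : Type v} [NormedAddCommGroup K] [InnerProductSpace ℂ K] [CompleteSpace K]
    (S : Submodule ℂ K) : CompleteSpace S.topologicalClosure :=
  S.isClosed_topologicalClosure.completeSpace_coe

/-- The restriction of an operator to an invariant subspace. -/
def restrictOp (T : H →L[ℂ] H) (M : Submodule ℂ H) (hM : ∀ x ∈ M, T x ∈ M) :
    M →L[ℂ] M :=
  (T ∘L M.subtypeL).codRestrict M fun x => hM x x.2

/-- The smallest closed subspace of `K` containing `U^{-n}(X(M))` for every `n ≥ 1`. -/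
def tildeM {K : Type v} [NormedAddCommGroup K] [InnerProductSpace ℂ K] [CompleteSpace K]
    (X : H →L[ℂ] K) (U : K →L[ℂ] K) (M : Submodule ℂ H) : Submodule ℂ K :=
  (Submodule.span ℂ {k : K | ∃ (n : ℕ) (x : H), x ∈ M ∧
      k = ((star U) ^ (n + 1)) (X x)}).topologicalClosure

instance {K : Type v} [NormedAddCommGroup K] [InnerProductSpace ℂ K] [CompleteSpace K]
    (X : H →L[ℂ] K) (U : K →L[ℂ] K) (M : Submodule ℂ H) :
    CompleteSpace (tildeM X U M) :=
  (Submodule.isClosed_topologicalClosure _).completeSpace_coe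

namespace Stmt7Aux

local notation "⟪" x ", " y "⟫" => @inner ℂ _ _ x y

variable (𝒰 : Ultrafilter ℕ)

open scoped Classical in
/-- limit of a (bounded) sequence along an ultrafilter -/
def ulim (f : ℕ → ℂ) : ℂ :=
  if h : ∃ c, Tendsto f (𝒰 : Filter ℕ) (𝓝 c) then h.choose else 0

lemma ulim_spec {f : ℕ → ℂ} (h : ∃ c, Tendsto f (𝒰 : Filter ℕ) (𝓝 c)) :
    Tendsto f (𝒰 : Filter ℕ) (𝓝 (ulim 𝒰 f)) := by
  rw [ulim, dif_pos h]; exact h.choose_spec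

lemma ulim_eq {f : ℕ → ℂ} {c : ℂ} (h : Tendsto f (𝒰 : Filter ℕ) (𝓝 c)) :
    ulim 𝒰 f = c :=
  tendsto_nhds_unique (ulim_spec 𝒰 ⟨c, h⟩) h

lemma exists_ulim {f : ℕ → ℂ} {c : ℝ} (hf : ∀ n, ‖f n‖ ≤ c) :
    ∃ x, Tendsto f (𝒰 : Filter ℕ) (𝓝 x) := by
  obtain ⟨x, -, hx⟩ := (isCompact_closedBall (0 : ℂ) c).ultrafilter_le_nhds (𝒰.map f)
    (by
      rw [Filter.le_principal_iff, Ultrafilter.mem_coe, Ultrafilter.mem_map]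
      exact Filter.univ_mem' fun n => by
        simpa [Metric.mem_closedBall, dist_eq_norm] using hf n)
  exact ⟨x, hx⟩

lemma norm_ulim_le {f : ℕ → ℂ} {c : ℝ} (hf : ∀ n, ‖f n‖ ≤ c) : ‖ulim 𝒰 f‖ ≤ c :=
  le_of_tendsto ((ulim_spec 𝒰 (exists_ulim 𝒰 hf)).norm) (Eventually.of_forall hf)


section WotLim
variable {E F : Type*} [NormedAddCommGroup E] [NormedSpace ℂ E]
  [NormedAddCommGroup F] [InnerProductSpace ℂ F] [CompleteSpace F]

variable (A : ℕ → E →L[ℂ] F) {C : ℝ} (hC : ∀ N, ‖A N‖ ≤ C)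

include hC

lemma inner_bound (h : E) (k : F) (N : ℕ) : ‖⟪A N h, k⟫‖ ≤ C * ‖h‖ * ‖k‖ := by
  calc ‖⟪A N h, k⟫‖ ≤ ‖A N h‖ * ‖k‖ := norm_inner_le_norm _ _
  _ ≤ (C * ‖h‖) * ‖k‖ := by
      have h1 := (A N).le_opNorm h
      have h2 : ‖A N h‖ ≤ C * ‖h‖ :=
        h1.trans (mul_le_mul_of_nonneg_right (hC N) (norm_nonneg h))
      exact mul_le_mul_of_nonneg_right h2 (norm_nonneg k)

lemma exists_ulim_inner (h : E) (k : F) :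
    ∃ c, Tendsto (fun N => ⟪A N h, k⟫) (𝒰 : Filter ℕ) (𝓝 c) :=
  exists_ulim 𝒰 (inner_bound A hC h k)

/-- the WOT limit along 𝒰, applied to a vector, as a continuous linear functional -/
def wotForm (h : E) : F →L[ℂ] ℂ :=
  LinearMap.mkContinuous
    { toFun := fun k => ulim 𝒰 fun N => ⟪A N h, k⟫
      map_add' := fun k₁ k₂ => by
        refine ulim_eq 𝒰 ?_
        have t1 := ulim_spec 𝒰 (exists_ulim_inner 𝒰 A hC h k₁)
        have t2 := ulim_spec 𝒰 (exists_ulim_inner 𝒰 A hC h k₂)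
        simpa only [← inner_add_right] using t1.add t2
      map_smul' := fun c k => by
        refine ulim_eq 𝒰 ?_
        have t1 := (ulim_spec 𝒰 (exists_ulim_inner 𝒰 A hC h k)).const_mul c
        simpa only [← inner_smul_right, RingHom.id_apply, smul_eq_mul] using t1 }
    (C * ‖h‖)
    (fun k => by
      simpa using norm_ulim_le 𝒰 (fun N => inner_bound A hC h k N))

/-- the WOT limit along 𝒰 as a function -/
def wotFun (h : E) : F := (InnerProductSpace.toDual ℂ F).symm (wotForm 𝒰 A hC h)

lemma inner_wotFun (h : E) (k : F) :
    ⟪wotFun 𝒰 A hC h, k⟫ = ulim 𝒰 fun N => ⟪A N h, k⟫ := by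
  rw [wotFun, InnerProductSpace.toDual_symm_apply]
  rfl

lemma wotFun_tendsto (h : E) (k : F) :
    Tendsto (fun N => ⟪A N h, k⟫) (𝒰 : Filter ℕ) (𝓝 ⟪wotFun 𝒰 A hC h, k⟫) := by
  rw [inner_wotFun]
  exact ulim_spec 𝒰 (exists_ulim_inner 𝒰 A hC h k)

/-- the WOT limit along 𝒰 as a continuous linear map -/
def wotLim : E →L[ℂ] F :=
  LinearMap.mkContinuous
    { toFun := wotFun 𝒰 A hC
      map_add' := fun h₁ h₂ => by
        refine ext_inner_right ℂ fun k => ?_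
        rw [inner_add_left, inner_wotFun, inner_wotFun, inner_wotFun]
        refine ulim_eq 𝒰 ?_
        have t1 := ulim_spec 𝒰 (exists_ulim_inner 𝒰 A hC h₁ k)
        have t2 := ulim_spec 𝒰 (exists_ulim_inner 𝒰 A hC h₂ k)
        simpa only [← inner_add_left, ← map_add] using t1.add t2
      map_smul' := fun c h => by
        refine ext_inner_right ℂ fun k => ?_
        rw [RingHom.id_apply, inner_smul_left, inner_wotFun, inner_wotFun]
        refine ulim_eq 𝒰 ?_
        have t1 := (ulim_spec 𝒰 (exists_ulim_inner 𝒰 A hC h k)).const_mul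
          ((starRingEnd ℂ) c)
        simpa only [← inner_smul_left, ← map_smul] using t1 }
    C
    (fun h => by
      have h0 : 0 ≤ C := le_trans (norm_nonneg (A 0)) (hC 0)
      have : ‖wotFun 𝒰 A hC h‖ = ‖wotForm 𝒰 A hC h‖ :=
        LinearIsometryEquiv.norm_map _ _
      simp only [LinearMap.coe_mk, AddHom.coe_mk, this]
      calc ‖wotForm 𝒰 A hC h‖ ≤ C * ‖h‖ :=
        LinearMap.mkContinuous_norm_le _ (by positivity) _
      _ = C * ‖h‖ := rfl)

lemma inner_wotLim (h : E) (k : F) :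
    ⟪wotLim 𝒰 A hC h, k⟫ = ulim 𝒰 fun N => ⟪A N h, k⟫ :=
  inner_wotFun 𝒰 A hC h k

lemma wotLim_tendsto (h : E) (k : F) :
    Tendsto (fun N => ⟪A N h, k⟫) (𝒰 : Filter ℕ) (𝓝 ⟪wotLim 𝒰 A hC h, k⟫) :=
  wotFun_tendsto 𝒰 A hC h k

end WotLim
section UnitaryFacts
variable {W : Type*} [NormedAddCommGroup W] [InnerProductSpace ℂ W] [CompleteSpace W]

lemma unitary_star_apply_apply {u : W →L[ℂ] W} (hu : u ∈ unitary (W →L[ℂ] W)) (v : W) :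
    (star u) (u v) = v := by
  have h := (Unitary.mem_iff.mp hu).1
  calc (star u) (u v) = (star u * u) v := rfl
  _ = v := by rw [h]; rfl

lemma unitary_apply_star_apply {u : W →L[ℂ] W} (hu : u ∈ unitary (W →L[ℂ] W)) (v : W) :
    u ((star u) v) = v := by
  have h := (Unitary.mem_iff.mp hu).2
  calc u ((star u) v) = (u * star u) v := rfl
  _ = v := by rw [h]; rfl

lemma unitary_norm_apply {u : W →L[ℂ] W} (hu : u ∈ unitary (W →L[ℂ] W)) (v : W) :
    ‖u v‖ = ‖v‖ := by
  have h0 : ⟪u v, u v⟫ = ⟪v, v⟫ := by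
    have h1 := ContinuousLinearMap.adjoint_inner_left u (v) (u v)
    rw [← ContinuousLinearMap.star_eq_adjoint, unitary_star_apply_apply hu] at h1
    exact h1.symm
  have h3 : ‖u v‖ ^ 2 = ‖v‖ ^ 2 := by
    have h2 := congrArg (RCLike.re (K := ℂ)) h0
    rwa [inner_self_eq_norm_sq, inner_self_eq_norm_sq] at h2
  nlinarith [norm_nonneg (u v), norm_nonneg v, sq_nonneg (‖u v‖ - ‖v‖)]

lemma unitary_pow_star_mem {u : W →L[ℂ] W} (hu : u ∈ unitary (W →L[ℂ] W)) (n : ℕ) :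
    (star u) ^ n ∈ unitary (W →L[ℂ] W) :=
  pow_mem (Unitary.star_mem hu) n

lemma unitary_apply_star_pow {u : W →L[ℂ] W} (hu : u ∈ unitary (W →L[ℂ] W)) (n : ℕ)
    (v : W) : u (((star u) ^ (n + 1)) v) = ((star u) ^ n) v := by
  have h : u * (star u) ^ (n + 1) = (star u) ^ n := by
    rw [pow_succ']
    rw [← mul_assoc, (Unitary.mem_iff.mp hu).2, one_mul]
  calc u (((star u) ^ (n + 1)) v) = (u * (star u) ^ (n + 1)) v := rfl
  _ = ((star u) ^ n) v := by rw [h]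

lemma unitary_star_pow_apply_pow {u : W →L[ℂ] W} (hu : u ∈ unitary (W →L[ℂ] W)) (n : ℕ)
    (v : W) : ((star u) ^ n) ((u ^ n) v) = v := by
  have h : (star u) ^ n * u ^ n = 1 := by
    rw [← star_pow]
    exact (Unitary.mem_iff.mp (pow_mem hu n)).1
  calc ((star u) ^ n) ((u ^ n) v) = ((star u) ^ n * u ^ n) v := rfl
  _ = v := by rw [h]; rfl

end UnitaryFacts

section Extension
open UniformSpace

lemma intertwine_pow {E : Type*} [NormedAddCommGroup E] [InnerProductSpace ℂ E]
    {F : Type*} [NormedAddCommGroup F] [InnerProductSpace ℂ F]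
    {T' : E →L[ℂ] E} {X' : E →L[ℂ] F} {U' : F →L[ℂ] F}
    (h : X' ∘L T' = U' ∘L X') (n : ℕ) (x : E) :
    X' ((T' ^ n) x) = (U' ^ n) (X' x) := by
  induction n generalizing x with
  | zero => simp
  | succ n ih =>
    have h1 : (T' ^ (n + 1)) x = (T' ^ n) (T' x) := by rw [pow_succ]; rfl
    have h2 : X' (T' x) = U' (X' x) := by
      have := congrArg (fun (W : E →L[ℂ] F) => W x) h
      simpa using this
    have h3 : (U' ^ (n + 1)) (X' x) = (U' ^ n) (U' (X' x)) := by rw [pow_succ]; rfl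
    rw [h1, ih, h2, h3]

variable {H : Type u} [NormedAddCommGroup H] [InnerProductSpace ℂ H]
  {K' : Type w} [NormedAddCommGroup K'] [InnerProductSpace ℂ K'] [CompleteSpace K']

lemma restrictOp_coe (T : H →L[ℂ] H) (M : Submodule ℂ H) (hMinv : ∀ x ∈ M, T x ∈ M) (x : M) :
    ((restrictOp T M hMinv) x : H) = T (x : H) := rfl

lemma restrictOp_pow_coe (T : H →L[ℂ] H) (M : Submodule ℂ H) (hMinv : ∀ x ∈ M, T x ∈ M)
    (n : ℕ) (x : M) :
    (((restrictOp T M hMinv) ^ n) x : H) = (T ^ n) (x : H) := by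
  induction n generalizing x with
  | zero => simp
  | succ n ih =>
    calc (((restrictOp T M hMinv) ^ (n + 1)) x : H)
        = (((restrictOp T M hMinv) ^ n) ((restrictOp T M hMinv) x) : H) := by
          rw [pow_succ]; rfl
      _ = (T ^ n) (((restrictOp T M hMinv) x : H)) := ih _
      _ = (T ^ n) (T (x : H)) := by rw [restrictOp_coe]
      _ = (T ^ (n + 1)) (x : H) := by rw [pow_succ]; rfl

set_option maxHeartbeats 2000000 in
lemma exists_pair_extension (T : H →L[ℂ] H) (hT : PowerBounded T)
    (M : Submodule ℂ H) (hMinv : ∀ x ∈ M, T x ∈ M)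
    (X' : M →L[ℂ] K') (U' : K' →L[ℂ] K')
    (hp : IsUnitaryPair (restrictOp T M hMinv) X' U') :
    ∃ Y : H →L[ℂ] K', IsUnitaryPair T Y U' ∧ ∀ x : M, Y (x : H) = X' x := by
  classical
  obtain ⟨𝒰, h𝒰⟩ := Ultrafilter.exists_le (atTop : Filter ℕ)
  obtain ⟨MT, hMT⟩ := hT
  set Mc : ℝ := max MT 1 with hMcdef
  have hMc0 : 0 ≤ Mc := le_trans zero_le_one (le_max_right _ _)
  have hMc : ∀ n : ℕ, ‖T ^ n‖ ≤ Mc := fun n => le_trans (hMT n) (le_max_left _ _)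
  set ι := (Completion.toComplL : H →L[ℂ] Completion H) with hιdef
  have hι : ∀ h : H, ι h = (h : Completion H) := fun h => rfl
  have hιd : DenseRange ⇑ι := by
    rw [hιdef, Completion.coe_toComplL]
    exact Completion.denseRange_coe
  have hιui : IsUniformInducing ⇑ι := by
    rw [hιdef, Completion.coe_toComplL]
    exact Completion.isUniformInducing_coe H
  have hιnorm : ∀ h : H, ‖ι h‖ = ‖h‖ := fun h => by
    rw [hι]; exact Completion.norm_coe h
  set Tb := (ι ∘L T).extend ι with hTbdef
  have hTb : ∀ h : H, Tb (ι h) = ι (T h) := fun h =>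
    ContinuousLinearMap.extend_eq _ hιd hιui h
  have hTbpow : ∀ (n : ℕ) (h : H), (Tb ^ n) (ι h) = ι ((T ^ n) h) := by
    intro n
    induction n with
    | zero => intro h; simp
    | succ n ih =>
      intro h
      calc (Tb ^ (n + 1)) (ι h) = (Tb ^ n) (Tb (ι h)) := by rw [pow_succ]; rfl
        _ = (Tb ^ n) (ι (T h)) := by rw [hTb]
        _ = ι ((T ^ n) (T h)) := ih _
        _ = ι ((T ^ (n + 1)) h) := by rw [pow_succ]; rfl
  have hTbnorm : ∀ (n : ℕ) (v : Completion H), ‖(Tb ^ n) v‖ ≤ Mc * ‖v‖ := by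
    intro n v
    refine hιd.induction_on v ?_ ?_
    · exact isClosed_le ((Tb ^ n).continuous.norm) (continuous_const.mul continuous_norm)
    · intro h
      rw [hTbpow n h, hιnorm, hιnorm]
      exact le_trans ((T ^ n).le_opNorm h)
        (mul_le_mul_of_nonneg_right (hMc n) (norm_nonneg h))
  set S := M.map (ι : H →ₗ[ℂ] Completion H) with hSdef
  set Mb := S.topologicalClosure with hMbdef
  have hMb_mem : ∀ x : H, x ∈ M → ι x ∈ Mb := fun x hx =>
    S.le_topologicalClosure (Submodule.mem_map_of_mem hx)
  have hMb_closed : (Mb : Set (Completion H)) = closure (S : Set (Completion H)) :=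
    S.topologicalClosure_coe
  set j := (ι ∘L M.subtypeL).codRestrict Mb (fun x => hMb_mem x x.2) with hjdef
  have hj : ∀ x : M, (j x : Completion H) = ι (x : H) := fun x => rfl
  have hjnorm : ∀ x : M, ‖j x‖ = ‖x‖ := fun x => by
    have h1 : ‖j x‖ = ‖(j x : Completion H)‖ := rfl
    rw [h1, hj, hιnorm]
    rfl
  have hjui : IsUniformInducing ⇑j :=
    (ContinuousLinearMap.isUniformEmbedding_of_bound j (K := 1)
      (fun x => by rw [hjnorm]; simp)).isUniformInducing
  have hjd : DenseRange ⇑j := by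
    intro y
    have him : Subtype.val '' Set.range ⇑j = (S : Set (Completion H)) := by
      ext v
      constructor
      · rintro ⟨w, ⟨x, rfl⟩, rfl⟩
        exact ⟨(x : H), x.2, rfl⟩
      · rintro ⟨x, hx, rfl⟩
        exact ⟨j ⟨x, hx⟩, ⟨⟨x, hx⟩, rfl⟩, rfl⟩
    rw [closure_subtype, him, ← hMb_closed]
    exact y.2
  set Xb := X'.extend j with hXbdef
  have hXb : ∀ x : M, Xb (j x) = X' x := fun x =>
    ContinuousLinearMap.extend_eq _ hjd hjui x
  have hXbnorm : ∀ w : Mb, ‖Xb w‖ ≤ ‖X'‖ * ‖w‖ := by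
    intro w
    refine hjd.induction_on w ?_ ?_
    · exact isClosed_le (Xb.continuous.norm) (continuous_const.mul continuous_norm)
    · intro x
      rw [hXb, hjnorm]
      exact X'.le_opNorm x
  set P := Mb.orthogonalProjectionOnto with hPdef
  have hPn : ∀ v : Completion H, ‖P v‖ ≤ ‖v‖ := fun v => by
    refine le_trans (P.le_opNorm v) ?_
    calc ‖P‖ * ‖v‖ ≤ 1 * ‖v‖ :=
          mul_le_mul_of_nonneg_right (by rw [hPdef]; exact Submodule.orthogonalProjectionOnto_norm_le Mb)
            (norm_nonneg v)
      _ = ‖v‖ := one_mul _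
  have hPmem : ∀ (v : Completion H) (hv : v ∈ Mb), P v = ⟨v, hv⟩ := fun v hv =>
    Submodule.orthogonalProjectionOnto_mem_subspace_eq_self (K := Mb) ⟨v, hv⟩
  have hU' := hp.1
  set D : ℕ → Completion H →L[ℂ] K' := fun n =>
    ((star U') ^ n) ∘L (Xb ∘L (P ∘L (Tb ^ n))) with hDdef
  have hDapp : ∀ n v, D n v = ((star U') ^ n) (Xb (P ((Tb ^ n) v))) := fun n v => rfl
  set CC := ‖X'‖ * Mc with hCCdef
  have hCC0 : 0 ≤ CC := by rw [hCCdef]; positivity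
  have hDnormv : ∀ n v, ‖D n v‖ ≤ CC * ‖v‖ := by
    intro n v
    rw [hDapp, unitary_norm_apply (unitary_pow_star_mem hU' n)]
    calc ‖Xb (P ((Tb ^ n) v))‖ ≤ ‖X'‖ * ‖P ((Tb ^ n) v)‖ := hXbnorm _
      _ ≤ ‖X'‖ * ‖(Tb ^ n) v‖ := mul_le_mul_of_nonneg_left (hPn _) (norm_nonneg X')
      _ ≤ ‖X'‖ * (Mc * ‖v‖) := mul_le_mul_of_nonneg_left (hTbnorm n v) (norm_nonneg X')
      _ = CC * ‖v‖ := by rw [hCCdef]; ring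
  have hDnorm : ∀ n, ‖D n‖ ≤ CC := fun n =>
    ContinuousLinearMap.opNorm_le_bound _ hCC0 (hDnormv n)
  set A : ℕ → Completion H →L[ℂ] K' := fun N =>
    (((N + 1 : ℕ) : ℂ))⁻¹ • (∑ n ∈ Finset.range (N + 1), D n) with hAdef
  have hAapp : ∀ N v, A N v
      = (((N + 1 : ℕ) : ℂ))⁻¹ • ∑ n ∈ Finset.range (N + 1), D n v := by
    intro N v
    rw [hAdef]
    simp [ContinuousLinearMap.sum_apply]
  have hNc : ∀ N : ℕ, (((N + 1 : ℕ) : ℂ)) ≠ 0 := fun N =>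
    Nat.cast_ne_zero.mpr (Nat.succ_ne_zero N)
  have hNnorm : ∀ N : ℕ, ‖(((N + 1 : ℕ) : ℂ))⁻¹‖ = ((N + 1 : ℕ) : ℝ)⁻¹ := fun N => by
    rw [norm_inv, Complex.norm_natCast]
  have hNR : ∀ N : ℕ, ((N + 1 : ℕ) : ℝ) ≠ 0 := fun N =>
    Nat.cast_ne_zero.mpr (Nat.succ_ne_zero N)
  have hA : ∀ N, ‖A N‖ ≤ CC := by
    intro N
    refine ContinuousLinearMap.opNorm_le_bound _ hCC0 (fun v => ?_)
    rw [hAapp]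
    refine le_trans (norm_smul_le _ _) ?_
    rw [hNnorm]
    have h1 : ‖∑ n ∈ Finset.range (N + 1), D n v‖ ≤ ((N + 1 : ℕ) : ℝ) * (CC * ‖v‖) := by
      refine le_trans (norm_sum_le _ _) ?_
      calc ∑ n ∈ Finset.range (N + 1), ‖D n v‖
          ≤ ∑ _n ∈ Finset.range (N + 1), CC * ‖v‖ :=
            Finset.sum_le_sum (fun i _ => hDnormv i v)
        _ = ((N + 1 : ℕ) : ℝ) * (CC * ‖v‖) := by
            rw [Finset.sum_const, Finset.card_range, nsmul_eq_mul]
    calc ((N + 1 : ℕ) : ℝ)⁻¹ * ‖∑ n ∈ Finset.range (N + 1), D n v‖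
        ≤ ((N + 1 : ℕ) : ℝ)⁻¹ * (((N + 1 : ℕ) : ℝ) * (CC * ‖v‖)) :=
          mul_le_mul_of_nonneg_left h1 (by positivity)
      _ = CC * ‖v‖ := by rw [← mul_assoc, inv_mul_cancel₀ (hNR N), one_mul]
  set Y0 := wotLim 𝒰 A hA with hY0def
  have hrec : ∀ (N : ℕ) (v : Completion H),
      A N (Tb v) = U' (A N v) + (((N + 1 : ℕ) : ℂ))⁻¹ • (U' (D (N + 1) v - D 0 v)) := by
    intro N v
    have h1 : ∀ n, D n (Tb v) = U' (D (n + 1) v) := by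
      intro n
      rw [hDapp, hDapp]
      have h2 : (Tb ^ n) (Tb v) = (Tb ^ (n + 1)) v := by rw [pow_succ]; rfl
      rw [h2, unitary_apply_star_pow hU']
    have h3 : (∑ n ∈ Finset.range (N + 1), D (n + 1) v)
        = (∑ n ∈ Finset.range (N + 1), D n v) + (D (N + 1) v - D 0 v) := by
      have e1 := Finset.sum_range_succ (fun n => D n v) (N + 1)
      have e2 := Finset.sum_range_succ' (fun n => D n v) (N + 1)
      rw [e1] at e2
      calc (∑ n ∈ Finset.range (N + 1), D (n + 1) v)
          = (∑ n ∈ Finset.range (N + 1), D (n + 1) v) + D 0 v - D 0 v := by abel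
        _ = ((∑ n ∈ Finset.range (N + 1), D n v) + D (N + 1) v) - D 0 v := by rw [← e2]
        _ = (∑ n ∈ Finset.range (N + 1), D n v) + (D (N + 1) v - D 0 v) := by abel
    calc A N (Tb v)
        = (((N + 1 : ℕ) : ℂ))⁻¹ • ∑ n ∈ Finset.range (N + 1), D n (Tb v) := hAapp N (Tb v)
      _ = (((N + 1 : ℕ) : ℂ))⁻¹ • ∑ n ∈ Finset.range (N + 1), U' (D (n + 1) v) := by
          rw [Finset.sum_congr rfl (fun n _ => h1 n)]
      _ = (((N + 1 : ℕ) : ℂ))⁻¹ • U' (∑ n ∈ Finset.range (N + 1), D (n + 1) v) := by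
          rw [map_sum]
      _ = (((N + 1 : ℕ) : ℂ))⁻¹ • U'
            ((∑ n ∈ Finset.range (N + 1), D n v) + (D (N + 1) v - D 0 v)) := by rw [h3]
      _ = U' (A N v) + (((N + 1 : ℕ) : ℂ))⁻¹ • (U' (D (N + 1) v - D 0 v)) := by
          rw [map_add, smul_add, hAapp N v, map_smul]
  have key1 : ∀ v : Completion H, Y0 (Tb v) = U' (Y0 v) := by
    intro v
    refine ext_inner_right ℂ fun k => ?_
    have t1 : Tendsto (fun N => (inner ℂ (U' (A N v)) k : ℂ)) (𝒰 : Filter ℕ)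
        (𝓝 (inner ℂ (U' (Y0 v)) k)) := by
      have := wotLim_tendsto 𝒰 A hA v ((ContinuousLinearMap.adjoint U') k)
      rw [hY0def]
      simpa only [ContinuousLinearMap.adjoint_inner_right] using this
    have t2 : Tendsto
        (fun N => (inner ℂ ((((N + 1 : ℕ) : ℂ))⁻¹ • (U' (D (N + 1) v - D 0 v))) k : ℂ))
        (𝒰 : Filter ℕ) (𝓝 0) := by
      refine Tendsto.mono_left ?_ h𝒰
      refine squeeze_zero_norm (a := fun N => ((N + 1 : ℕ) : ℝ)⁻¹ * (2 * (CC * ‖v‖) * ‖k‖)) ?_ ?_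
      · intro N
        have hb : ‖U' (D (N + 1) v - D 0 v)‖ ≤ 2 * (CC * ‖v‖) := by
          rw [unitary_norm_apply hU']
          refine le_trans (norm_sub_le _ _) ?_
          have hb1 := hDnormv (N + 1) v
          have hb2 := hDnormv 0 v
          linarith
        calc ‖(inner ℂ ((((N + 1 : ℕ) : ℂ))⁻¹ • (U' (D (N + 1) v - D 0 v))) k : ℂ)‖
            ≤ ‖(((N + 1 : ℕ) : ℂ))⁻¹ • (U' (D (N + 1) v - D 0 v))‖ * ‖k‖ :=
              norm_inner_le_norm _ _
          _ = ((N + 1 : ℕ) : ℝ)⁻¹ * ‖U' (D (N + 1) v - D 0 v)‖ * ‖k‖ := by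
              rw [norm_smul, hNnorm]
          _ ≤ ((N + 1 : ℕ) : ℝ)⁻¹ * (2 * (CC * ‖v‖)) * ‖k‖ := by
              have hk : (0:ℝ) ≤ ‖k‖ := norm_nonneg k
              have hi : (0:ℝ) ≤ ((N + 1 : ℕ) : ℝ)⁻¹ := by positivity
              exact mul_le_mul_of_nonneg_right
                (mul_le_mul_of_nonneg_left hb hi) hk
          _ = ((N + 1 : ℕ) : ℝ)⁻¹ * (2 * (CC * ‖v‖) * ‖k‖) := by ring
      · have hlim : Tendsto (fun N : ℕ => ((N + 1 : ℕ) : ℝ)⁻¹) atTop (𝓝 0) := by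
          have := tendsto_one_div_add_atTop_nhds_zero_nat (𝕜 := ℝ)
          simpa only [one_div, Nat.cast_add, Nat.cast_one] using this
        have := hlim.mul_const (2 * (CC * ‖v‖) * ‖k‖)
        simpa using this
    have t3 : Tendsto (fun N => (inner ℂ (A N (Tb v)) k : ℂ)) (𝒰 : Filter ℕ)
        (𝓝 (inner ℂ (U' (Y0 v)) k)) := by
      have t4 := t1.add t2
      rw [add_zero] at t4
      refine Tendsto.congr (fun N => ?_) t4
      rw [← inner_add_left, ← hrec N v]
    rw [hY0def, inner_wotLim]
    exact ulim_eq 𝒰 t3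
  have key2 : ∀ x : M, Y0 (ι (x : H)) = X' x := by
    intro x
    have hDx : ∀ n : ℕ, D n (ι (x : H)) = X' x := by
      intro n
      rw [hDapp]
      set y := ((restrictOp T M hMinv) ^ n) x with hydef
      have h1 : (Tb ^ n) (ι (x : H)) = ι (y : H) := by
        rw [hTbpow n (x : H)]
        exact congrArg ι (restrictOp_pow_coe T M hMinv n x).symm
      have h2 : P (ι (y : H)) = j y := by
        rw [hPmem (ι (y : H)) (hMb_mem _ y.2)]
        exact Subtype.ext rfl
      rw [h1, h2, hXb, hydef, intertwine_pow hp.2 n x,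
        unitary_star_pow_apply_pow hU']
    have hAx : ∀ N, A N (ι (x : H)) = X' x := by
      intro N
      rw [hAapp]
      rw [Finset.sum_congr rfl (fun n _ => hDx n), Finset.sum_const, Finset.card_range,
        ← Nat.cast_smul_eq_nsmul ℂ, smul_smul, inv_mul_cancel₀ (hNc N), one_smul]
    refine ext_inner_right ℂ fun k => ?_
    rw [hY0def, inner_wotLim]
    refine ulim_eq 𝒰 ?_
    have heq : (fun N => (inner ℂ (A N (ι (x : H))) k : ℂ)) = fun _ => inner ℂ (X' x) k :=
      funext fun N => by rw [hAx N]
    rw [heq]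
    exact tendsto_const_nhds
  refine ⟨Y0 ∘L ι, ⟨hU', ?_⟩, fun x => key2 x⟩
  ext h
  simp only [ContinuousLinearMap.comp_apply]
  rw [← hTb, key1]

end Extension

section GenSet
variable {H : Type u} [NormedAddCommGroup H] [InnerProductSpace ℂ H]
  {K : Type v} [NormedAddCommGroup K] [InnerProductSpace ℂ K] [CompleteSpace K]

/-- the generating set of `tildeM` -/
def genSet (X : H →L[ℂ] K) (U : K →L[ℂ] K) (M : Submodule ℂ H) : Set K :=
  {k : K | ∃ (n : ℕ) (x : H), x ∈ M ∧ k = ((star U) ^ (n + 1)) (X x)}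

lemma tildeM_eq (X : H →L[ℂ] K) (U : K →L[ℂ] K) (M : Submodule ℂ H) :
    tildeM X U M = (Submodule.span ℂ (genSet X U M)).topologicalClosure := rfl

lemma tildeM_coe (X : H →L[ℂ] K) (U : K →L[ℂ] K) (M : Submodule ℂ H) :
    (tildeM X U M : Set K) = closure ((Submodule.span ℂ (genSet X U M) : Submodule ℂ K) : Set K) :=
  Submodule.topologicalClosure_coe _

lemma span_le_tildeM (X : H →L[ℂ] K) (U : K →L[ℂ] K) (M : Submodule ℂ H) :
    ∀ w ∈ Submodule.span ℂ (genSet X U M), w ∈ tildeM X U M := fun _ hw =>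
  (Submodule.span ℂ (genSet X U M)).le_topologicalClosure hw

lemma genSet_mem_tildeM (X : H →L[ℂ] K) (U : K →L[ℂ] K) (M : Submodule ℂ H)
    (n : ℕ) (x : H) (hx : x ∈ M) : ((star U) ^ (n + 1)) (X x) ∈ tildeM X U M :=
  span_le_tildeM X U M _ (Submodule.subset_span ⟨n, x, hx, rfl⟩)

end GenSet

end Stmt7Aux

open Stmt7Aux in
/-- If `(X, U)` is a unitary asymptote of the power bounded `T` and `M` is a closed
`T`-invariant subspace, then `M̃` is reducing for `U`, `X` maps `M` into `M̃`, and
`(X|_M, U|_{M̃})` is a unitary asymptote of `T|_M`. -/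
theorem stmt_7 {K : Type v} [NormedAddCommGroup K] [InnerProductSpace ℂ K] [CompleteSpace K]
    (T : H →L[ℂ] H) (hT : PowerBounded T) (X : H →L[ℂ] K) (U : K →L[ℂ] K)
    (hua : IsUnitaryAsymptote T X U)
    (M : Submodule ℂ H) (hMc : IsClosed (M : Set H)) (hMinv : ∀ x ∈ M, T x ∈ M) :
    (∀ k ∈ tildeM X U M, U k ∈ tildeM X U M) ∧
    (∀ k ∈ tildeM X U M, (star U) k ∈ tildeM X U M) ∧
    (∀ x ∈ M, X x ∈ tildeM X U M) ∧
    ∃ (XM : M →L[ℂ] tildeM X U M) (UM : tildeM X U M →L[ℂ] tildeM X U M),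
      (∀ x : M, (XM x : K) = X (x : H)) ∧
      (∀ k : tildeM X U M, (UM k : K) = U (k : K)) ∧
      IsUnitaryAsymptote (restrictOp T M hMinv) XM UM := by
  classical
  obtain ⟨⟨hUuni, hXT⟩, huniv⟩ := hua
  have hgen : ∀ (n : ℕ) (x : H), x ∈ M → ((star U) ^ (n + 1)) (X x) ∈ tildeM X U M :=
    fun n x hx => genSet_mem_tildeM X U M n x hx
  -- X maps M into tildeM
  have hXmem : ∀ x ∈ M, X x ∈ tildeM X U M := by
    intro x hx
    have h1 : X (T x) = U (X x) := by
      have := congrArg (fun W : H →L[ℂ] K => W x) hXT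
      simpa using this
    have h2 : ((star U) ^ (0 + 1)) (X (T x)) = X x := by
      rw [pow_one, h1]
      exact unitary_star_apply_apply hUuni (X x)
    have h3 := hgen 0 (T x) (hMinv x hx)
    rwa [h2] at h3
  have hmem : ∀ (n : ℕ) (x : H), x ∈ M → ((star U) ^ n) (X x) ∈ tildeM X U M := by
    intro n x hx
    cases n with
    | zero => simpa using hXmem x hx
    | succ n => exact hgen n x hx
  -- mapping the closure
  have hmaps : ∀ f : K →L[ℂ] K,
      (∀ (n : ℕ) (x : H), x ∈ M → f (((star U) ^ (n + 1)) (X x)) ∈ tildeM X U M) →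
      ∀ k ∈ tildeM X U M, f k ∈ tildeM X U M := by
    intro f hf k hk
    have hsub : genSet X U M ⊆ ((tildeM X U M).comap (f : K →ₗ[ℂ] K) : Set K) := by
      rintro w ⟨n, x, hx, rfl⟩
      exact hf n x hx
    have hspan : ∀ w ∈ Submodule.span ℂ (genSet X U M), f w ∈ tildeM X U M :=
      fun w hw => (Submodule.span_le.mpr hsub) hw
    have hklos : k ∈ closure ((Submodule.span ℂ (genSet X U M) : Submodule ℂ K) : Set K) := by
      rw [← tildeM_coe]
      exact hk
    have h4 := map_mem_closure f.continuous hklos (fun w hw => hspan w hw)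
    have h5 : closure ((tildeM X U M) : Set K) = ((tildeM X U M) : Set K) :=
      IsClosed.closure_eq (Submodule.isClosed_topologicalClosure _)
    rw [h5] at h4
    exact h4
  have hUmaps : ∀ k ∈ tildeM X U M, U k ∈ tildeM X U M := by
    refine hmaps U ?_
    intro n x hx
    cases n with
    | zero =>
      have h1 : U (((star U) ^ (0 + 1)) (X x)) = X x := by
        rw [pow_one]
        exact unitary_apply_star_apply hUuni (X x)
      rw [h1]
      exact hXmem x hx
    | succ n =>
      rw [unitary_apply_star_pow hUuni (n + 1) (X x)]
      exact hgen n x hx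
  have hsUmaps : ∀ k ∈ tildeM X U M, (star U) k ∈ tildeM X U M := by
    refine hmaps (star U) ?_
    intro n x hx
    have h1 : (star U) (((star U) ^ (n + 1)) (X x)) = ((star U) ^ (n + 2)) (X x) := by
      have h2 : (star U) ^ (n + 2) = star U * (star U) ^ (n + 1) := pow_succ' _ _
      rw [h2]
      rfl
    rw [h1]
    exact hgen (n + 1) x hx
  refine ⟨hUmaps, hsUmaps, hXmem, ?_⟩
  set XM := ContinuousLinearMap.codRestrict (X ∘L M.subtypeL) (tildeM X U M)
    (fun x => hXmem (x : H) x.2) with hXMdef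
  set UM := ContinuousLinearMap.codRestrict (U ∘L (tildeM X U M).subtypeL) (tildeM X U M)
    (fun k => hUmaps (k : K) k.2) with hUMdef
  set VM := ContinuousLinearMap.codRestrict ((star U) ∘L (tildeM X U M).subtypeL) (tildeM X U M)
    (fun k => hsUmaps (k : K) k.2) with hVMdef
  have hXMc : ∀ x : M, (XM x : K) = X (x : H) := fun x => rfl
  have hUMc : ∀ k : tildeM X U M, (UM k : K) = U (k : K) := fun k => rfl
  have hVMc : ∀ k : tildeM X U M, (VM k : K) = (star U) (k : K) := fun k => rfl
  have hadj : VM = ContinuousLinearMap.adjoint UM := by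
    rw [ContinuousLinearMap.eq_adjoint_iff]
    intro p q
    rw [Submodule.coe_inner, Submodule.coe_inner, hVMc, hUMc]
    rw [ContinuousLinearMap.star_eq_adjoint]
    exact ContinuousLinearMap.adjoint_inner_left U (q : K) (p : K)
  have hUMuni : UM ∈ unitary (tildeM X U M →L[ℂ] tildeM X U M) := by
    rw [Unitary.mem_iff]
    constructor
    · ext k
      rw [ContinuousLinearMap.mul_apply, ContinuousLinearMap.star_eq_adjoint, ← hadj]
      rw [hVMc, hUMc, ContinuousLinearMap.one_apply]
      exact unitary_star_apply_apply hUuni (k : K)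
    · ext k
      rw [ContinuousLinearMap.mul_apply, ContinuousLinearMap.star_eq_adjoint, ← hadj]
      rw [hUMc, hVMc, ContinuousLinearMap.one_apply]
      exact unitary_apply_star_apply hUuni (k : K)
  have hinter : XM ∘L (restrictOp T M hMinv) = UM ∘L XM := by
    ext x
    rw [ContinuousLinearMap.comp_apply, ContinuousLinearMap.comp_apply, hXMc, hUMc, hXMc,
      restrictOp_coe]
    have := congrArg (fun W : H →L[ℂ] K => W (x : H)) hXT
    simpa using this
  refine ⟨XM, UM, hXMc, hUMc, ⟨hUMuni, hinter⟩, ?_⟩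
  intro K'' _ _ _ X'' U'' hp''
  obtain ⟨Y, hYpair, hYres⟩ := exists_pair_extension T hT M hMinv X'' U'' hp''
  obtain ⟨Z0, ⟨hZ0U, hZ0X⟩, -⟩ := huniv K'' Y U'' hYpair
  set Z := Z0 ∘L (tildeM X U M).subtypeL with hZdef
  have c1 : Z ∘L UM = U'' ∘L Z := by
    ext k
    show Z0 ((UM k : K)) = U'' (Z0 (k : K))
    rw [hUMc]
    have := congrArg (fun W : K →L[ℂ] K'' => W (k : K)) hZ0U
    simpa using this
  have c2 : X'' = Z ∘L XM := by
    ext x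
    show X'' x = Z0 ((XM x : K))
    rw [hXMc]
    have h6 := congrArg (fun W : H →L[ℂ] K'' => W (x : H)) hZ0X
    simp only [ContinuousLinearMap.comp_apply] at h6
    rw [← h6]
    exact (hYres x).symm
  -- uniqueness of intertwiners out of tildeM
  have hstep : ∀ W : tildeM X U M →L[ℂ] K'', W ∘L UM = U'' ∘L W →
      ∀ (k : K) (hk : k ∈ tildeM X U M) (hk' : (star U) k ∈ tildeM X U M),
        W ⟨(star U) k, hk'⟩ = (star U'') (W ⟨k, hk⟩) := by
    intro W hW k hk hk'
    have h1 : UM ⟨(star U) k, hk'⟩ = ⟨k, hk⟩ := Subtype.ext (by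
      rw [hUMc]
      exact unitary_apply_star_apply hUuni k)
    have h2 := congrArg (fun V : tildeM X U M →L[ℂ] K'' => V ⟨(star U) k, hk'⟩) hW
    simp only [ContinuousLinearMap.comp_apply] at h2
    rw [h1] at h2
    rw [h2]
    exact (unitary_star_apply_apply hp''.1 _).symm
  have hgenval : ∀ W : tildeM X U M →L[ℂ] K'',
      W ∘L UM = U'' ∘L W → X'' = W ∘L XM →
      ∀ (n : ℕ) (x : H) (hx : x ∈ M),
        W ⟨((star U) ^ n) (X x), hmem n x hx⟩ = ((star U'') ^ n) (X'' ⟨x, hx⟩) := by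
    intro W hWU hWX n
    induction n with
    | zero =>
      intro x hx
      have h1 : (⟨((star U) ^ 0) (X x), hmem 0 x hx⟩ : tildeM X U M) = XM ⟨x, hx⟩ :=
        Subtype.ext (by rw [hXMc]; simp)
      rw [h1]
      have h2 := congrArg (fun V : M →L[ℂ] K'' => V ⟨x, hx⟩) hWX
      simp only [ContinuousLinearMap.comp_apply] at h2
      rw [← h2]
      simp
    | succ n ih =>
      intro x hx
      have hval : ((star U) ^ (n + 1)) (X x) = (star U) (((star U) ^ n) (X x)) := by
        have h2 : (star U) ^ (n + 1) = star U * (star U) ^ n := pow_succ' _ _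
        rw [h2]
        rfl
      have e : (⟨((star U) ^ (n + 1)) (X x), hmem (n + 1) x hx⟩ : tildeM X U M) =
          ⟨(star U) (((star U) ^ n) (X x)), hval ▸ hmem (n + 1) x hx⟩ := Subtype.ext hval
      rw [e, hstep W hWU _ (hmem n x hx) _, ih x hx]
      have hval'' : ((star U'') ^ (n + 1)) (X'' ⟨x, hx⟩)
          = (star U'') (((star U'') ^ n) (X'' ⟨x, hx⟩)) := by
        have h2 : (star U'') ^ (n + 1) = star U'' * (star U'') ^ n := pow_succ' _ _
        rw [h2]
        rfl
      rw [hval'']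
  have huniq : ∀ W₁ W₂ : tildeM X U M →L[ℂ] K'',
      W₁ ∘L UM = U'' ∘L W₁ → X'' = W₁ ∘L XM →
      W₂ ∘L UM = U'' ∘L W₂ → X'' = W₂ ∘L XM → W₁ = W₂ := by
    intro W₁ W₂ h1U h1X h2U h2X
    have hspanagree : ∀ (w : K) (hw : w ∈ Submodule.span ℂ (genSet X U M)),
        ∀ hw' : w ∈ tildeM X U M, W₁ ⟨w, hw'⟩ = W₂ ⟨w, hw'⟩ := by
      intro w hw
      induction hw using Submodule.span_induction with
      | mem w hwg =>
        obtain ⟨n, x, hx, rfl⟩ := hwg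
        intro hw'
        calc W₁ ⟨((star U) ^ (n + 1)) (X x), hw'⟩
            = ((star U'') ^ (n + 1)) (X'' ⟨x, hx⟩) := hgenval W₁ h1U h1X (n + 1) x hx
          _ = W₂ ⟨((star U) ^ (n + 1)) (X x), hw'⟩ :=
              (hgenval W₂ h2U h2X (n + 1) x hx).symm
      | zero =>
        intro h0
        have hz : (⟨(0 : K), h0⟩ : tildeM X U M) = 0 := rfl
        rw [hz, map_zero, map_zero]
      | add a b ha hb iha ihb =>
        intro hab
        have hsum : (⟨a + b, hab⟩ : tildeM X U M)
            = ⟨a, span_le_tildeM X U M a ha⟩ + ⟨b, span_le_tildeM X U M b hb⟩ := rfl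
        rw [hsum, map_add, map_add, iha, ihb]
      | smul c a ha iha =>
        intro hca
        have hsm : (⟨c • a, hca⟩ : tildeM X U M) = c • ⟨a, span_le_tildeM X U M a ha⟩ := rfl
        rw [hsm, map_smul, map_smul, iha]
    have hdense : Dense {q : tildeM X U M | (q : K) ∈ Submodule.span ℂ (genSet X U M)} := by
      intro q
      have him : Subtype.val '' {q : tildeM X U M | (q : K) ∈ Submodule.span ℂ (genSet X U M)}
          = ((Submodule.span ℂ (genSet X U M) : Submodule ℂ K) : Set K) := by
        ext v
        constructor
        · rintro ⟨⟨w, hw⟩, hmem2, rfl⟩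
          exact hmem2
        · intro hv
          exact ⟨⟨v, span_le_tildeM X U M v hv⟩, hv, rfl⟩
      rw [closure_subtype, him, ← tildeM_coe]
      exact q.2
    have hfun : ⇑W₁ = ⇑W₂ := by
      refine Continuous.ext_on hdense W₁.continuous W₂.continuous ?_
      intro q hq
      have h7 := hspanagree (q : K) hq q.2
      have h8 : (⟨(q : K), q.2⟩ : tildeM X U M) = q := rfl
      rw [h8] at h7
      exact h7
    exact ContinuousLinearMap.coeFn_injective hfun
  exact ⟨Z, ⟨c1, c2⟩, fun W hW => huniq W Z hW.1 hW.2 c1 c2⟩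

end
end

section
/- Let T be a bounded linear operator on a complex Hilbert space H. If there exists a nonzero bounded operator B on H satisfying T* B T = B, then the spectral radius of T satisfies r(T) ≥ 1. -/
set_option maxHeartbeats 1000000 in
/-- If a nonzero bounded operator `B` satisfies `T* B T = B`, then the spectral radius
of `T` is at least `1`. -/
theorem stmt_10 {H : Type*} [NormedAddCommGroup H] [InnerProductSpace ℂ H] [CompleteSpace H]
    (T B : H →L[ℂ] H) (hB : B ≠ 0)
    (h : ContinuousLinearMap.adjoint T ∘L B ∘L T = B) :
    1 ≤ spectralRadius ℂ T := by
  have key : ∀ n : ℕ, ContinuousLinearMap.adjoint (T ^ n) ∘L B ∘L (T ^ n) = B := by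
    intro n
    induction n with
    | zero => simp [pow_zero, ContinuousLinearMap.one_def, ContinuousLinearMap.adjoint_id]
    | succ n ih =>
      rw [pow_succ, ContinuousLinearMap.mul_def, ContinuousLinearMap.adjoint_comp,
        ← ContinuousLinearMap.comp_assoc B (T ^ n) T,
        ContinuousLinearMap.comp_assoc (ContinuousLinearMap.adjoint T)
          (ContinuousLinearMap.adjoint (T ^ n)) ((B ∘L T ^ n) ∘L T),
        ← ContinuousLinearMap.comp_assoc (ContinuousLinearMap.adjoint (T ^ n)) (B ∘L T ^ n) T]
      rw [show ContinuousLinearMap.adjoint (T ^ n) ∘L (B ∘L T ^ n) =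
        ContinuousLinearMap.adjoint (T ^ n) ∘L B ∘L T ^ n from rfl, ih, h]
  have hnorm : ∀ n : ℕ, (1 : ℝ) ≤ ‖T ^ n‖ := by
    intro n
    by_contra hlt
    push_neg at hlt
    have hBpos : (0 : ℝ) < ‖B‖ := norm_pos_iff.mpr hB
    have h1 : ‖B‖ ≤ ‖ContinuousLinearMap.adjoint (T ^ n)‖ * ‖B‖ * ‖T ^ n‖ := by
      calc ‖B‖ = ‖ContinuousLinearMap.adjoint (T ^ n) ∘L B ∘L (T ^ n)‖ := by rw [key n]
        _ ≤ ‖ContinuousLinearMap.adjoint (T ^ n)‖ * ‖B ∘L (T ^ n)‖ :=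
            ContinuousLinearMap.opNorm_comp_le _ _
        _ ≤ ‖ContinuousLinearMap.adjoint (T ^ n)‖ * (‖B‖ * ‖T ^ n‖) := by
            gcongr; exact ContinuousLinearMap.opNorm_comp_le _ _
        _ = ‖ContinuousLinearMap.adjoint (T ^ n)‖ * ‖B‖ * ‖T ^ n‖ := by ring
    rw [LinearIsometryEquiv.norm_map ContinuousLinearMap.adjoint (T ^ n)] at h1
    have hTn0 : (0 : ℝ) ≤ ‖T ^ n‖ := norm_nonneg _
    nlinarith [mul_pos (sub_pos.mpr hlt) (show (0:ℝ) < 1 + ‖T ^ n‖ by linarith), hBpos]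
  have gel := spectrum.pow_nnnorm_pow_one_div_tendsto_nhds_spectralRadius T
  refine ge_of_tendsto gel ?_
  filter_upwards [Filter.eventually_gt_atTop 0] with n hn
  have h1 : (1 : ENNReal) ≤ (‖T ^ n‖₊ : ENNReal) := by
    rw [← ENNReal.coe_one, ENNReal.coe_le_coe]
    exact_mod_cast hnorm n
  calc (1 : ENNReal) = 1 ^ ((1 : ℝ)/n) := (ENNReal.one_rpow _).symm
    _ ≤ (‖T ^ n‖₊ : ENNReal) ^ ((1 : ℝ)/n) := by
        exact ENNReal.rpow_le_rpow h1 (by positivity)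
end
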